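/- Let z₁,…,zₙ be nonzero complex numbers and w̃ ∈ {1,-1}ⁿ be optimal for maximizing |∑ᵢ wᵢ zᵢ| with nonzero optimal value. Then there exists a unit complex number u such that for each i, w̃ᵢ = 1 if Re(u · conj(zᵢ)) > 0, w̃ᵢ = -1 if Re(u · conj(zᵢ)) < 0, and Re(u · conj(zᵢ)) ≠ 0 for all i. (Existence of a separating line through the origin.) -/

import Mathlib

theorem stmt3 (n : ℕ) (z : Fin n → ℂ) (hz : ∀ i, z i ≠ 0)
    (w : Fin n → ℝ) (hw : ∀ i, w i = 1 ∨ w i = -1)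
    (hopt : ∀ v : Fin n → ℝ, (∀ i, v i = 1 ∨ v i = -1) →
      ‖∑ i, (v i : ℂ) * z i‖ ≤ ‖∑ i, (w i : ℂ) * z i‖)
    (hs : (∑ i, (w i : ℂ) * z i) ≠ 0) :
    ∃ u : ℂ, ‖u‖ = 1 ∧
      (∀ i, (u * (starRingEnd ℂ) (z i)).re ≠ 0) ∧
      (∀ i, 0 < (u * (starRingEnd ℂ) (z i)).re → w i = 1) ∧
      (∀ i, (u * (starRingEnd ℂ) (z i)).re < 0 → w i = -1) := by
  set S := ∑ i, (w i : ℂ) * z i with hS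
  have ha : 0 < ‖S‖ := by simpa using norm_pos_iff.mpr hs
  have key : ∀ i, ‖z i‖^2 ≤ w i * (S * (starRingEnd ℂ) (z i)).re := by
    intro i
    set v := Function.update w i (-(w i)) with hv
    have hv2 : ∀ j, v j = 1 ∨ v j = -1 := by
      intro j
      by_cases hji : j = i
      · subst hji
        rcases hw j with h | h <;> simp [hv, h]
      · simpa [hv, Function.update_of_ne hji] using hw j
    have hdiff : ∑ j, (v j : ℂ) * z j = S - 2 * (w i : ℂ) * z i := by
      have h1 : ∑ j, ((v j : ℂ) * z j - (w j : ℂ) * z j)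
          = (v i : ℂ) * z i - (w i : ℂ) * z i := by
        refine Fintype.sum_eq_single i ?_
        intro j hj
        simp [hv, Function.update_of_ne hj]
      have hvi : v i = -(w i) := Function.update_self i _ _
      have h2 : ∑ j, (v j : ℂ) * z j = S + ((v i : ℂ) * z i - (w i : ℂ) * z i) := by
        rw [← h1, hS, ← Finset.sum_add_distrib]
        exact Finset.sum_congr rfl (fun x _ => by ring)
      rw [h2, hvi]
      push_cast
      ring
    have hle := hopt v hv2
    rw [hdiff] at hle
    have h2 : Complex.normSq (S - 2 * (w i : ℂ) * z i) ≤ Complex.normSq S := by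
      rw [← Complex.sq_norm, ← Complex.sq_norm]
      exact pow_le_pow_left₀ (norm_nonneg _) hle 2
    have hw2 : w i * w i = 1 := by rcases hw i with h | h <;> simp [h]
    rw [Complex.sq_norm]
    simp only [Complex.normSq_apply, Complex.sub_re, Complex.sub_im, Complex.mul_re,
      Complex.mul_im, Complex.ofReal_re, Complex.ofReal_im, Complex.conj_re, Complex.conj_im,
      Complex.mul_re, Complex.mul_im, Complex.ofReal_mul, Complex.re_ofNat, Complex.im_ofNat] at h2 ⊢
    nlinarith [h2, hw2]
  have hzpos : ∀ i, 0 < ‖z i‖^2 := fun i =>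
    pow_pos (norm_pos_iff.mpr (hz i)) 2
  have hre : ∀ i, (S / (‖S‖ : ℂ) * (starRingEnd ℂ) (z i)).re
      = (S * (starRingEnd ℂ) (z i)).re / ‖S‖ := by
    intro i
    rw [div_mul_eq_mul_div, Complex.div_ofReal_re]
  refine ⟨S / (‖S‖ : ℂ), ?_, ?_, ?_, ?_⟩
  · simp [norm_div, abs_of_pos ha, div_self (ne_of_gt ha)]
  · intro i h0
    rw [hre i] at h0
    have hR : (S * (starRingEnd ℂ) (z i)).re = 0 := by
      rcases div_eq_zero_iff.mp h0 with h | h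
      · exact h
      · exact absurd h (ne_of_gt ha)
    have := key i
    rw [hR, mul_zero] at this
    exact absurd this (not_le.mpr (hzpos i))
  · intro i h0
    rw [hre i, lt_div_iff₀ ha, zero_mul] at h0
    rcases hw i with h | h
    · exact h
    · exfalso
      have := key i
      rw [h] at this
      nlinarith [hzpos i]
  · intro i h0
    rw [hre i, div_lt_iff₀ ha, zero_mul] at h0
    rcases hw i with h | h
    · exfalso
      have := key i
      rw [h, one_mul] at this
      nlinarith [hzpos i]
    · exact h
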